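/- Let Y′ and g be real-valued square-integrable random variables and let the class label be a binary random variable B. Suppose that within each class (conditionally on B = 0 and on B = 1) g is independent of Y′, and that the conditional mean and variance of g are the same in both classes (E[g | B=0] = E[g | B=1] and Var(g | B=0) = Var(g | B=1) > 0 or ≥ 0). Define Y = Y′ + g. Then Fisher's discriminant ratio of Y′, namely (E[Y′|B=1] − E[Y′|B=0])² / (Var(Y′|B=1) + Var(Y′|B=0)), is greater than or equal to Fisher's discriminant ratio of Y, with strict inequality whenever Var(g | B=b) > 0 for some b and the class means of Y′ differ. That is, removing an independent additive component with class-invariant distribution from a feature can only increase its Fisher's discriminant ratio. -/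

import Mathlib

open MeasureTheory ProbabilityTheory

/-- Fisher's discriminant ratio of a real-valued feature `X` for a binary class
label `B`: `(μ₁ − μ₀)² / (σ₁² + σ₀²)`, where `μ_b` and `σ_b²` are the mean and
variance of `X` under the conditional measure given `B = b`. -/
noncomputable def fisherRatio {Ω : Type*} [MeasurableSpace Ω] (μ : Measure Ω)
    (B : Ω → Bool) (X : Ω → ℝ) : ℝ :=
  (∫ ω, X ω ∂(μ[|B ⁻¹' {true}]) - ∫ ω, X ω ∂(μ[|B ⁻¹' {false}])) ^ 2 /
    (variance X (μ[|B ⁻¹' {true}]) + variance X (μ[|B ⁻¹' {false}]))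

/-- Let `Y′` and `g` be real-valued square-integrable random
variables and let the class label be a binary random variable `B`.  Suppose
that within each class (conditionally on `B = 0` and on `B = 1`) `g` is
independent of `Y′`, and that the conditional mean and variance of `g` are the
same in both classes.  Define `Y = Y′ + g`.  Then Fisher's discriminant ratio
of `Y′` is greater than or equal to Fisher's discriminant ratio of `Y`, with
strict inequality whenever `Var(g | B = b) > 0` for some `b` and the class
means of `Y′` differ: removing an independent additive component with
class-invariant distribution from a feature can only increase its Fisher's
discriminant ratio. -/
theorem fisherRatio_le_of_remove_additive_component
    {Ω : Type*} [MeasurableSpace Ω] (μ : Measure Ω) [IsProbabilityMeasure μ]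
    (Y' g : Ω → ℝ) (B : Ω → Bool)
    (hY'm : Measurable Y') (hgm : Measurable g) (hBm : Measurable B)
    (hpos : ∀ b : Bool, μ (B ⁻¹' {b}) ≠ 0)
    (hY'L2 : ∀ b : Bool, MemLp Y' 2 (μ[|B ⁻¹' {b}]))
    (hgL2 : ∀ b : Bool, MemLp g 2 (μ[|B ⁻¹' {b}]))
    (hindep : ∀ b : Bool, IndepFun Y' g (μ[|B ⁻¹' {b}]))
    (hmean : ∫ ω, g ω ∂(μ[|B ⁻¹' {false}]) = ∫ ω, g ω ∂(μ[|B ⁻¹' {true}]))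
    (hvar : variance g (μ[|B ⁻¹' {false}]) = variance g (μ[|B ⁻¹' {true}]))
    (hvarY' : 0 < variance Y' (μ[|B ⁻¹' {true}]) + variance Y' (μ[|B ⁻¹' {false}])) :
    fisherRatio μ B (fun ω => Y' ω + g ω) ≤ fisherRatio μ B Y' ∧
    (((0 < variance g (μ[|B ⁻¹' {false}]) ∨ 0 < variance g (μ[|B ⁻¹' {true}])) ∧
        ∫ ω, Y' ω ∂(μ[|B ⁻¹' {true}]) ≠ ∫ ω, Y' ω ∂(μ[|B ⁻¹' {false}])) →
      fisherRatio μ B (fun ω => Y' ω + g ω) < fisherRatio μ B Y') := by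
  have hP : ∀ b : Bool, IsProbabilityMeasure (μ[|B ⁻¹' {b}]) :=
    fun b => cond_isProbabilityMeasure (hpos b)
  have hIntY' : ∀ b : Bool, Integrable Y' (μ[|B ⁻¹' {b}]) := fun b =>
    (hY'L2 b).integrable (by norm_num)
  have hIntg : ∀ b : Bool, Integrable g (μ[|B ⁻¹' {b}]) := fun b =>
    (hgL2 b).integrable (by norm_num)
  have hmeanb : ∀ b : Bool, ∫ ω, (Y' ω + g ω) ∂(μ[|B ⁻¹' {b}]) =
      ∫ ω, Y' ω ∂(μ[|B ⁻¹' {b}]) + ∫ ω, g ω ∂(μ[|B ⁻¹' {b}]) := fun b =>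
    integral_add (hIntY' b) (hIntg b)
  have hvarb : ∀ b : Bool, variance (fun ω => Y' ω + g ω) (μ[|B ⁻¹' {b}]) =
      variance Y' (μ[|B ⁻¹' {b}]) + variance g (μ[|B ⁻¹' {b}]) := fun b => by
    have := (hindep b).variance_add (hY'L2 b) (hgL2 b)
    exact this
  set m1 := ∫ ω, Y' ω ∂(μ[|B ⁻¹' {true}])
  set m0 := ∫ ω, Y' ω ∂(μ[|B ⁻¹' {false}])
  set s1 := variance Y' (μ[|B ⁻¹' {true}])
  set s0 := variance Y' (μ[|B ⁻¹' {false}])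
  set v := variance g (μ[|B ⁻¹' {true}]) with hv
  have hv0 : 0 ≤ v := variance_nonneg _ _
  have hnum : (∫ ω, (Y' ω + g ω) ∂(μ[|B ⁻¹' {true}]) -
      ∫ ω, (Y' ω + g ω) ∂(μ[|B ⁻¹' {false}])) = m1 - m0 := by
    rw [hmeanb true, hmeanb false, hmean]; ring
  have hEq : fisherRatio μ B (fun ω => Y' ω + g ω) =
      (m1 - m0) ^ 2 / (s1 + s0 + 2 * v) := by
    rw [fisherRatio, hnum, hvarb true, hvarb false, hvar]; simp only [s1, s0, v]; ring_nf
  have hEq' : fisherRatio μ B Y' = (m1 - m0) ^ 2 / (s1 + s0) := rfl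
  constructor
  · rw [hEq, hEq']
    apply div_le_div_of_nonneg_left (by positivity) hvarY' (by linarith)
  · rintro ⟨hvpos, hne⟩
    have hvpos' : 0 < v := by
      rcases hvpos with h | h
      · rw [hvar] at h; exact h
      · exact h
    have hnum0 : 0 < (m1 - m0) ^ 2 := by
      have : m1 - m0 ≠ 0 := sub_ne_zero.mpr hne
      positivity
    rw [hEq, hEq']
    apply div_lt_div_of_pos_left hnum0 hvarY'
    linarith
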